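/- Let $V$ be a finite-dimensional $\mathbb{Q}$-vector space with a nondegenerate alternating bilinear form, and let $\delta_1, \dots, \delta_{2g}$ be a basis. Suppose real-valued quantities $x_1, \dots, x_{2g}$ and operators $N_1, \dots, N_{2g}$ (each $N_i$ a derivation-like 'monodromy increment' acting linearly on the $x_j$, with $N_i(x_j) = 0$ for $i \neq j$ and $N_i(c) = 0$ for constants $c$) satisfy $c_i = N_i(x_i) + (-1)^m \sum_{j=1}^{2g} x_j (\delta_j, \delta_i)$ with $c_i \in \mathbb{Z}$ for all $i$. Assume further that for each $k$ with $2 \le k \le 2g$ there exists $\ell < k$ with $(\delta_\ell, \delta_k) \neq 0$. If there is a nontrivial rational relation $\sum_{j=1}^{2g} \lambda_j x_j = \lambda_0$ ($\lambda_j \in \mathbb{Q}$, not all $\lambda_1,\dots,\lambda_{2g}$ zero), then $N_i(x_i) = 0$ for all $i = 1, \dots, 2g$. -/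

import Mathlib

/-- Core of the proof of Theorem 3.1: with `V` a finite-dimensional `ℚ`-vector
space with nondegenerate alternating form and basis `δ`, real-valued
quantities `x j` (elements of an `ℝ`-algebra `F` of functions) and monodromy
increments `N i` (`ℝ`-linear, killing constants and `x j` for `j ≠ i`)
satisfying `c i = N i (x i) + (-1)^m ∑ j (δ j, δ i) x j` with `c i ∈ ℤ`, and
with the chain condition on the pairings, any nontrivial rational relation
`∑ λ j x j = λ₀` forces `N i (x i) = 0` for all `i`. -/
theorem stmt11 (g : ℕ) {V : Type*} [AddCommGroup V] [Module ℚ V]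
    [FiniteDimensional ℚ V]
    (B : V →ₗ[ℚ] V →ₗ[ℚ] ℚ) (halt : ∀ v, B v v = 0) (hnd : B.Nondegenerate)
    (δ : Module.Basis (Fin (2 * g)) ℚ V)
    {F : Type*} [CommRing F] [Algebra ℝ F]
    (x : Fin (2 * g) → F) (N : Fin (2 * g) → (F →ₗ[ℝ] F))
    (hconst : ∀ (i : Fin (2 * g)) (r : ℝ), N i (algebraMap ℝ F r) = 0)
    (hoff : ∀ i j : Fin (2 * g), i ≠ j → N i (x j) = 0)
    (m : ℕ) (c : Fin (2 * g) → ℤ)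
    (heq : ∀ i : Fin (2 * g),
      algebraMap ℝ F (c i) =
        N i (x i) + algebraMap ℝ F ((-1 : ℝ) ^ m) *
          ∑ j, algebraMap ℝ F ((B (δ j) (δ i) : ℚ) : ℝ) * x j)
    (hchain : ∀ k : Fin (2 * g), 1 ≤ (k : ℕ) →
      ∃ ℓ : Fin (2 * g), (ℓ : ℕ) < (k : ℕ) ∧ B (δ ℓ) (δ k) ≠ 0)
    (lam : Fin (2 * g) → ℚ) (lam0 : ℚ) (hlam : lam ≠ 0)
    (hrel : ∑ j, algebraMap ℝ F ((lam j : ℝ)) * x j = algebraMap ℝ F ((lam0 : ℝ))) :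
    ∀ i : Fin (2 * g), N i (x i) = 0 := by
  -- antisymmetry of the alternating form
  have hskew : ∀ a b : V, B a b = -(B b a) := by
    intro a b
    have h := halt (a + b)
    simp only [map_add, LinearMap.add_apply, halt a, halt b] at h
    linarith
  -- Lemma A: a relation with nonzero i-th coefficient kills N i (x i)
  have lemA : ∀ (μ : Fin (2 * g) → ℝ) (r : ℝ),
      (∑ j, algebraMap ℝ F (μ j) * x j = algebraMap ℝ F r) →
      ∀ i, μ i ≠ 0 → N i (x i) = 0 := by
    intro μ r hsum i hμ
    have h2 : (∑ j, μ j • x j) = algebraMap ℝ F r := by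
      simpa only [Algebra.smul_def] using hsum
    have h1 : N i (∑ j, μ j • x j) = μ i • N i (x i) := by
      rw [map_sum, Finset.sum_eq_single i]
      · rw [map_smul]
      · intro j _ hj
        rw [map_smul, hoff i j (Ne.symm hj), smul_zero]
      · intro h; exact absurd (Finset.mem_univ i) h
    have h3 : μ i • N i (x i) = 0 := by
      rw [← h1, h2, hconst]
    have h4 := congrArg (fun y => (μ i)⁻¹ • y) h3
    simpa [smul_smul, inv_mul_cancel₀ hμ] using h4
  -- Lemma B combo: N i (x i) = 0 and B (δ k) (δ i) ≠ 0 gives N k (x k) = 0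
  have combo : ∀ i k : Fin (2 * g), N i (x i) = 0 → B (δ k) (δ i) ≠ 0 →
      N k (x k) = 0 := by
    intro i k hNi hB
    have h := heq i
    rw [hNi, zero_add] at h
    have key : algebraMap ℝ F ((-1 : ℝ) ^ m) * algebraMap ℝ F ((-1 : ℝ) ^ m) = 1 := by
      rw [← map_mul, ← mul_pow]
      norm_num
    have hrel' : ∑ j, algebraMap ℝ F ((B (δ j) (δ i) : ℚ) : ℝ) * x j
        = algebraMap ℝ F ((-1 : ℝ) ^ m * (c i : ℝ)) := by
      have := congrArg (fun y => algebraMap ℝ F ((-1 : ℝ) ^ m) * y) h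
      rw [← mul_assoc, key, one_mul] at this
      rw [← this, map_mul]
    exact lemA _ _ hrel' k (by exact_mod_cast hB)
  -- starting point: some lam i ≠ 0
  obtain ⟨i₀, hi₀⟩ := Function.ne_iff.mp hlam
  have hstart : N i₀ (x i₀) = 0 :=
    lemA (fun j => (lam j : ℝ)) (lam0 : ℝ) hrel i₀ (by simp only [Pi.zero_apply] at hi₀; exact_mod_cast hi₀)
  have hpos : 0 < 2 * g := i₀.pos
  set z : Fin (2 * g) := ⟨0, hpos⟩ with hz
  -- descent to index 0
  have descend : ∀ n : ℕ, ∀ i : Fin (2 * g), (i : ℕ) = n → N i (x i) = 0 →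
      N z (x z) = 0 := by
    intro n
    induction n using Nat.strong_induction_on with
    | _ n ih =>
      intro i hi hNi
      rcases Nat.eq_zero_or_pos n with h0 | hp
      · have : i = z := Fin.ext (by simp [hz, hi, h0])
        rwa [← this]
      · obtain ⟨ℓ, hℓ, hB⟩ := hchain i (by omega)
        have hNℓ : N ℓ (x ℓ) = 0 := combo i ℓ hNi hB
        exact ih ℓ (by omega) ℓ rfl hNℓ
  have hz0 : N z (x z) = 0 := descend i₀ i₀ rfl hstart
  -- ascent from index 0
  have ascend : ∀ n : ℕ, ∀ k : Fin (2 * g), (k : ℕ) = n → N k (x k) = 0 := by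
    intro n
    induction n using Nat.strong_induction_on with
    | _ n ih =>
      intro k hk
      rcases Nat.eq_zero_or_pos n with h0 | hp
      · have : k = z := Fin.ext (by simp [hz, hk, h0])
        rwa [this]
      · obtain ⟨ℓ, hℓ, hB⟩ := hchain k (by omega)
        have hNℓ : N ℓ (x ℓ) = 0 := ih ℓ (by omega) ℓ rfl
        apply combo ℓ k hNℓ
        rw [hskew (δ k) (δ ℓ)]
        simpa using hB
  intro i
  exact ascend i i rfl
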